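/- (Z-distance preservation under branching, weight argument) Let Q be a CSS code with Z-distance d. Form the deformed code by attaching a 2-layer branching sticker as above. Then any Z-logical operator of the deformed code whose restriction to the original qubits is a nontrivial Z-logical of Q has weight at least d. More precisely: multiplying a Z-operator λ supported on Q by any product of new Z-checks removes weight w from the original qubits and layer-1 qubits only at the cost of adding weight at least w on layer-2 (X-layer) qubits, so the total weight cannot drop below d. -/

import Mathlib

/-- **Z-distance preservation under branching.** Let `Q` be a CSS code whose
nontrivial `Z`-logicals all have weight at least `d`.  Attach a 2-layer branching
sticker: new `Z`-check `i` acts on original qubit `q i` (with `q` injective), on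
layer-1 qubits via column `i` of `D`, and on layer-2 qubit `i` (exactly one layer-2
coordinate, distinct for distinct checks).  Then for any nontrivial `Z`-logical
`lam` of `Q` and any product of new `Z`-checks (selected by `c`), the resulting
operator on the deformed qubit set has weight at least `d`. -/
theorem branching_preserves_Z_distance {rX rZ n r m : ℕ}
    (HX : Matrix (Fin rX) (Fin n) (ZMod 2)) (HZ : Matrix (Fin rZ) (Fin n) (ZMod 2))
    (hCSS : HX * HZ.transpose = 0) (d : ℕ)
    (hdist : ∀ z : Fin n → ZMod 2, HX.mulVec z = 0 →
      (¬ ∃ a : Fin rZ → ZMod 2, Matrix.vecMul a HZ = z) →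
      d ≤ (Finset.univ.filter (fun x : Fin n => z x ≠ 0)).card)
    (q : Fin m → Fin n) (hq : Function.Injective q)
    (D : Matrix (Fin r) (Fin m) (ZMod 2))
    (lam : Fin n → ZMod 2) (hlam1 : HX.mulVec lam = 0)
    (hlam2 : ¬ ∃ a : Fin rZ → ZMod 2, Matrix.vecMul a HZ = lam)
    (c : Fin m → ZMod 2) :
    d ≤ (Finset.univ.filter (fun x : Fin n ⊕ (Fin r ⊕ Fin m) =>
      ((Sum.elim lam (Sum.elim (fun _ => (0 : ZMod 2)) (fun _ => (0 : ZMod 2)))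
          : Fin n ⊕ (Fin r ⊕ Fin m) → ZMod 2) +
        ∑ i : Fin m, c i •
          (Sum.elim (fun j => if j = q i then (1 : ZMod 2) else 0)
            (Sum.elim (fun a => D a i) (fun j' => if j' = i then 1 else 0)))) x ≠ 0)).card := by
  classical
  set v : Fin n ⊕ (Fin r ⊕ Fin m) → ZMod 2 :=
      (Sum.elim lam (Sum.elim (fun _ => (0 : ZMod 2)) (fun _ => (0 : ZMod 2)))
          : Fin n ⊕ (Fin r ⊕ Fin m) → ZMod 2) +
        ∑ i : Fin m, c i •
          (Sum.elim (fun j => if j = q i then (1 : ZMod 2) else 0)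
            (Sum.elim (fun a => D a i) (fun j' => if j' = i then 1 else 0))) with hv
  have h1 : ∀ j : Fin n, v (Sum.inl j) =
      lam j + ∑ i : Fin m, c i * (if j = q i then (1 : ZMod 2) else 0) := by
    intro j
    simp [hv, Finset.sum_apply, Pi.smul_apply, smul_eq_mul]
  have h2 : ∀ j' : Fin m, v (Sum.inr (Sum.inr j')) = c j' := by
    intro j'
    simp [hv, Finset.sum_apply, Pi.smul_apply, smul_eq_mul]
  set f : Fin n → Fin n ⊕ (Fin r ⊕ Fin m) := fun j =>
    if h : ∃ i, q i = j ∧ c i ≠ 0 then Sum.inr (Sum.inr h.choose) else Sum.inl j with hf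
  refine le_trans (hdist lam hlam1 hlam2) ?_
  apply Finset.card_le_card_of_injOn f
  · intro j hj
    simp only [Finset.mem_coe, Finset.mem_filter, Finset.mem_univ, true_and] at hj ⊢
    by_cases h : ∃ i, q i = j ∧ c i ≠ 0
    · simp only [hf, dif_pos h]
      rw [h2]
      exact h.choose_spec.2
    · simp only [hf, dif_neg h]
      rw [h1]
      have : ∀ i : Fin m, c i * (if j = q i then (1 : ZMod 2) else 0) = 0 := by
        intro i
        by_cases hji : j = q i
        · have : c i = 0 := by
            by_contra hc
            exact h ⟨i, hji.symm, hc⟩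
          simp [this]
        · simp [hji]
      rw [Finset.sum_eq_zero fun i _ => this i, add_zero]
      exact hj
  · intro j1 hj1 j2 hj2 hfj
    by_cases h1' : ∃ i, q i = j1 ∧ c i ≠ 0 <;> by_cases h2' : ∃ i, q i = j2 ∧ c i ≠ 0
    · simp only [hf, dif_pos h1', dif_pos h2'] at hfj
      have : h1'.choose = h2'.choose := by
        simpa using hfj
      calc j1 = q h1'.choose := h1'.choose_spec.1.symm
        _ = q h2'.choose := by rw [this]
        _ = j2 := h2'.choose_spec.1
    · simp [hf, dif_pos h1', dif_neg h2'] at hfj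
    · simp [hf, dif_neg h1', dif_pos h2'] at hfj
    · simpa [hf, dif_neg h1', dif_neg h2'] using hfj
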